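/- With H, S, F, λ₁, τ, K, L as in the context, assume in addition 0 < τ ≤ (λ₁ − K)/(4L²). Let (w_k)_{k ∈ ℕ} be any sequence in H, and let (x_k), (y_k) be sequences in H satisfying x_{k+1} = S(x_k + τ F(x_k)) + w_k and y_{k+1} = S(y_k + τ F(y_k)) + w_k for all k. Then for every k ∈ ℕ and every real p ≥ 1, ‖x_k − y_k‖^{2p} ≤ e^{−(λ₁ − K) p k τ} ‖x_0 − y_0‖^{2p}. -/

import Mathlib

open MeasureTheory

/-- Pathwise (same-noise) exponential contraction of the exponential Euler scheme
(Proposition 2.6 of the paper): if `τ ≤ (λ₁ − K)/(4L²)`, then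
`‖x_k − y_k‖^{2p} ≤ e^{−(λ₁−K)pkτ} ‖x₀ − y₀‖^{2p}` for all `k ∈ ℕ` and `p ≥ 1`. -/
theorem stmt_4 {H : Type*} [NormedAddCommGroup H] [InnerProductSpace ℝ H]
    (S : H →L[ℝ] H) (F : H → H) (lam1 τ K L : ℝ)
    (hlam1 : 0 < lam1) (hτ : 0 < τ)
    (hS : ∀ x : H, ‖S x‖ ≤ Real.exp (-lam1 * τ) * ‖x‖)
    (hK : K < lam1)
    (hF1 : ∀ x y : H, (inner ℝ (x - y) (F x - F y) : ℝ) ≤ K * ‖x - y‖ ^ 2)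
    (hL : 0 < L)
    (hF2 : ∀ x y : H, ‖F x - F y‖ ≤ L * ‖x - y‖)
    (hτ2 : τ ≤ (lam1 - K) / (4 * L ^ 2))
    (w x y : ℕ → H)
    (hx : ∀ k, x (k + 1) = S (x k + τ • F (x k)) + w k)
    (hy : ∀ k, y (k + 1) = S (y k + τ • F (y k)) + w k)
    (k : ℕ) (p : ℝ) (hp : 1 ≤ p) :
    ‖x k - y k‖ ^ (2 * p) ≤
      Real.exp (-(lam1 - K) * p * (k : ℝ) * τ) * ‖x 0 - y 0‖ ^ (2 * p) := by
  have h4L : τ * (4 * L ^ 2) ≤ lam1 - K := by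
    have hpos : (0:ℝ) < 4 * L ^ 2 := by positivity
    exact (le_div_iff₀ hpos).mp hτ2
  -- one-step contraction in squared norm
  have hstep : ∀ n, ‖x (n+1) - y (n+1)‖^2 ≤
      Real.exp (-(lam1 - K) * τ) * ‖x n - y n‖^2 := by
    intro n
    set d := x n - y n with hd
    set g := F (x n) - F (y n) with hg
    have hxy : x (n+1) - y (n+1) = S (d + τ • g) := by
      rw [hx, hy]
      have : (x n + τ • F (x n)) - (y n + τ • F (y n)) = d + τ • g := by
        rw [hd, hg, smul_sub]; abel
      rw [← this, map_sub]; abel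
    have h1 : ‖x (n+1) - y (n+1)‖ ≤ Real.exp (-lam1*τ) * ‖d + τ • g‖ := by
      rw [hxy]; exact hS _
    have h2 : ‖d + τ • g‖^2 = ‖d‖^2 + 2*(τ * inner ℝ d g) + τ^2*‖g‖^2 := by
      rw [@norm_add_sq_real, real_inner_smul_right, norm_smul, Real.norm_eq_abs,
        mul_pow, sq_abs]
    have hinner : (inner ℝ d g : ℝ) ≤ K * ‖d‖^2 := hF1 (x n) (y n)
    have hgn : ‖g‖ ≤ L * ‖d‖ := hF2 _ _
    have hg2 : ‖g‖^2 ≤ L^2 * ‖d‖^2 := by nlinarith [norm_nonneg g, norm_nonneg d]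
    have hsum : ‖d + τ • g‖^2 ≤ (1 + 2*K*τ + τ^2*L^2) * ‖d‖^2 := by nlinarith
    have hexp1 : 1 + 2*K*τ + τ^2*L^2 ≤ Real.exp ((lam1+K)*τ) := by
      have ha : 2*K*τ + τ^2*L^2 ≤ (lam1+K)*τ := by nlinarith
      have hb : 1 + (2*K*τ + τ^2*L^2) ≤ Real.exp (2*K*τ + τ^2*L^2) := by
        have := Real.add_one_le_exp (2*K*τ + τ^2*L^2); linarith
      have hc : Real.exp (2*K*τ + τ^2*L^2) ≤ Real.exp ((lam1+K)*τ) :=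
        Real.exp_le_exp.mpr ha
      linarith
    have key : Real.exp (-lam1*τ)^2 * Real.exp ((lam1+K)*τ)
        = Real.exp (-(lam1-K)*τ) := by
      rw [sq, ← Real.exp_add, ← Real.exp_add]; congr 1; ring
    calc ‖x (n+1) - y (n+1)‖^2 ≤ (Real.exp (-lam1*τ) * ‖d + τ • g‖)^2 := by
          exact pow_le_pow_left₀ (norm_nonneg _) h1 2
      _ = Real.exp (-lam1*τ)^2 * ‖d + τ • g‖^2 := by ring
      _ ≤ Real.exp (-lam1*τ)^2 * (Real.exp ((lam1+K)*τ) * ‖d‖^2) := by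
          refine mul_le_mul_of_nonneg_left ?_ (by positivity)
          calc ‖d + τ • g‖^2 ≤ (1 + 2*K*τ + τ^2*L^2) * ‖d‖^2 := hsum
            _ ≤ Real.exp ((lam1+K)*τ) * ‖d‖^2 :=
                mul_le_mul_of_nonneg_right hexp1 (sq_nonneg _)
      _ = Real.exp (-(lam1-K)*τ) * ‖d‖^2 := by rw [← key]; ring
  -- iterate
  have hind : ∀ n : ℕ, ‖x n - y n‖^2 ≤
      Real.exp (-(lam1-K)*(n:ℝ)*τ) * ‖x 0 - y 0‖^2 := by
    intro n
    induction n with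
    | zero => simp
    | succ n ih =>
      calc ‖x (n+1) - y (n+1)‖^2 ≤ Real.exp (-(lam1-K)*τ) * ‖x n - y n‖^2 := hstep n
        _ ≤ Real.exp (-(lam1-K)*τ) * (Real.exp (-(lam1-K)*(n:ℝ)*τ) * ‖x 0 - y 0‖^2) :=
            mul_le_mul_of_nonneg_left ih (Real.exp_pos _).le
        _ = Real.exp (-(lam1-K)*((n:ℕ)+1:ℝ)*τ) * ‖x 0 - y 0‖^2 := by
            rw [← mul_assoc, ← Real.exp_add]; congr 2; ring
        _ = Real.exp (-(lam1-K)*((n+1:ℕ):ℝ)*τ) * ‖x 0 - y 0‖^2 := by push_cast; ring_nf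
  have hp0 : (0:ℝ) ≤ p := by linarith
  have hsq : ∀ z : H, ‖z‖ ^ (2*p) = (‖z‖^2 : ℝ) ^ p := by
    intro z
    rw [show (2:ℝ)*p = ((2:ℕ):ℝ)*p by norm_num, Real.rpow_mul (norm_nonneg _),
      Real.rpow_natCast]
  calc ‖x k - y k‖ ^ (2*p) = (‖x k - y k‖^2 : ℝ)^p := hsq _
    _ ≤ (Real.exp (-(lam1-K)*(k:ℝ)*τ) * ‖x 0 - y 0‖^2)^p :=
        Real.rpow_le_rpow (sq_nonneg _) (hind k) hp0
    _ = Real.exp (-(lam1 - K) * p * (k : ℝ) * τ) * ‖x 0 - y 0‖ ^ (2*p) := by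
        rw [Real.mul_rpow (Real.exp_pos _).le (sq_nonneg _), ← Real.exp_mul, hsq]
        congr 2; ring
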